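/- Let K, L ⊆ ℝⁿ be convex bodies and let λ ∈ (0,1) be such that (λK) ∩ ((1−λ)L) ≠ ∅. Then W( ((λK) ∩ ((1−λ)L)) / √(λ(1−λ)) ) · W((1−λ)K − λL) ≤ (λ(1−λ))^{−n/2} · W(K) · W(L), where (1−λ)K − λL = (1−λ)K + (−λL) is a Minkowski sum and the division denotes dilation by the factor 1/√(λ(1−λ)). -/

import Mathlib

open scoped Pointwise
open MeasureTheory Metric Real

/-- The Wills functional `W(K) = ∫_{ℝⁿ} e^{-π d(x,K)²} dx`. -/
noncomputable def wills {n : ℕ} (K : Set (EuclideanSpace ℝ (Fin n))) : ℝ :=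
  ∫ x, Real.exp (-π * (Metric.infDist x K) ^ 2)

namespace WillsRS

variable {n : ℕ}

/-- The `ℝ≥0∞`-valued integrand of the Wills functional. -/
noncomputable def phi (C : Set (EuclideanSpace ℝ (Fin n))) (x : EuclideanSpace ℝ (Fin n)) :
    ENNReal :=
  ENNReal.ofReal (Real.exp (-π * (Metric.infDist x C) ^ 2))

/-- The `ℝ≥0∞`-valued Wills functional. -/
noncomputable def W (C : Set (EuclideanSpace ℝ (Fin n))) : ENNReal := ∫⁻ x, phi C x

lemma continuous_phi (C : Set (EuclideanSpace ℝ (Fin n))) : Continuous (phi C) := by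
  apply ENNReal.continuous_ofReal.comp
  apply Real.continuous_exp.comp
  exact (continuous_const.mul ((continuous_infDist_pt C).pow 2))

lemma measurable_phi (C : Set (EuclideanSpace ℝ (Fin n))) : Measurable (phi C) :=
  (continuous_phi C).measurable

lemma phi_ne_top (C : Set (EuclideanSpace ℝ (Fin n))) (x : EuclideanSpace ℝ (Fin n)) :
    phi C x ≠ ⊤ := ENNReal.ofReal_ne_top

lemma wills_eq_toReal (C : Set (EuclideanSpace ℝ (Fin n))) : wills C = (W C).toReal := by
  unfold wills W phi
  apply integral_eq_lintegral_of_nonneg_ae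
  · exact Filter.Eventually.of_forall fun x => (Real.exp_pos _).le
  · exact (Real.continuous_exp.comp
      (continuous_const.mul ((continuous_infDist_pt C).pow 2))).aestronglyMeasurable

lemma W_vadd (c : EuclideanSpace ℝ (Fin n)) (C : Set (EuclideanSpace ℝ (Fin n))) :
    W (c +ᵥ C) = W C := by
  have hiso : Isometry (fun x : EuclideanSpace ℝ (Fin n) => c + x) :=
    Isometry.of_dist_eq (fun x y => by simp [dist_eq_norm, add_sub_add_left_eq_sub])
  have h1 : ∀ x, phi (c +ᵥ C) (c + x) = phi C x := by
    intro x
    unfold phi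
    rw [show (c +ᵥ C) = (fun y => c + y) '' C from by
      rw [← Set.image_vadd]; rfl]
    rw [show (c + x) = (fun y => c + y) x from rfl, infDist_image hiso]
  calc W (c +ᵥ C) = ∫⁻ x, phi (c +ᵥ C) (x + c) := by
        refine ((measurePreserving_add_right volume c).lintegral_comp (measurable_phi _)).symm
    _ = ∫⁻ x, phi C x := by
        refine lintegral_congr fun x => ?_
        rw [show x + c = c + x by abel, h1 x]
    _ = W C := rfl

lemma lintegral_comp_smul_add (G : EuclideanSpace ℝ (Fin n) → ENNReal) {c : ℝ} (hc : c ≠ 0)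
    (t : EuclideanSpace ℝ (Fin n)) :
    ∫⁻ x, G (c • x + t) = ENNReal.ofReal |(c ^ n)⁻¹| * ∫⁻ x, G x := by
  have hsm : Measurable (fun x : EuclideanSpace ℝ (Fin n) => c • x) :=
    (continuous_const_smul c).measurable
  have had : Measurable (fun x : EuclideanSpace ℝ (Fin n) => x + t) :=
    measurable_add_const t
  -- the homeomorphism x ↦ c • x + t
  let e₁ : EuclideanSpace ℝ (Fin n) ≃ₜ EuclideanSpace ℝ (Fin n) :=
    Homeomorph.smulOfNeZero c hc
  let e₂ : EuclideanSpace ℝ (Fin n) ≃ₜ EuclideanSpace ℝ (Fin n) := Homeomorph.addRight t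
  let e : EuclideanSpace ℝ (Fin n) ≃ᵐ EuclideanSpace ℝ (Fin n) :=
    (e₁.trans e₂).toMeasurableEquiv
  have he : ∀ x, e x = c • x + t := fun x => rfl
  have hmap : (volume : Measure (EuclideanSpace ℝ (Fin n))).map e
      = ENNReal.ofReal |(c ^ n)⁻¹| • volume := by
    have h1 : (volume : Measure (EuclideanSpace ℝ (Fin n))).map e
        = ((volume : Measure (EuclideanSpace ℝ (Fin n))).map (fun x => c • x)).map
            (fun x => x + t) := by
      rw [Measure.map_map had hsm]
      rfl
    rw [h1, Measure.map_addHaar_smul (volume : Measure (EuclideanSpace ℝ (Fin n))) hc,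
      Measure.map_smul, map_add_right_eq_self, finrank_euclideanSpace_fin]
  calc ∫⁻ x, G (c • x + t) = ∫⁻ x, G (e x) := by simp [he]
    _ = ∫⁻ x, G x ∂((volume : Measure (EuclideanSpace ℝ (Fin n))).map e) :=
        (MeasureTheory.lintegral_map_equiv G e).symm
    _ = ENNReal.ofReal |(c ^ n)⁻¹| * ∫⁻ x, G x := by rw [hmap, lintegral_smul_measure, smul_eq_mul]

lemma W_smul_ge {c : ℝ} (hc0 : 0 < c) (hc1 : c ≤ 1) (C : Set (EuclideanSpace ℝ (Fin n))) :
    ENNReal.ofReal (c ^ n) * W C ≤ W (c • C) := by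
  have hc : c ≠ 0 := ne_of_gt hc0
  have hkey : ∫⁻ x, phi (c • C) (c • x + 0) = ENNReal.ofReal |(c ^ n)⁻¹| * W (c • C) :=
    lintegral_comp_smul_add (phi (c • C)) hc 0
  have hpt : ∀ x, phi C x ≤ phi (c • C) (c • x + 0) := by
    intro x
    unfold phi
    rw [add_zero, infDist_smul₀ hc C x]
    apply ENNReal.ofReal_le_ofReal
    apply Real.exp_le_exp.2
    have h1 : (‖c‖ * infDist x C) ^ 2 ≤ (infDist x C) ^ 2 := by
      have hd : 0 ≤ infDist x C := infDist_nonneg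
      have : ‖c‖ * infDist x C ≤ 1 * infDist x C := by
        apply mul_le_mul_of_nonneg_right _ hd
        rw [Real.norm_eq_abs, abs_of_pos hc0]; exact hc1
      rw [one_mul] at this
      exact pow_le_pow_left₀ (by positivity) this 2
    nlinarith [Real.pi_pos]
  have h2 : W C ≤ ENNReal.ofReal |(c ^ n)⁻¹| * W (c • C) := by
    rw [← hkey]; exact lintegral_mono hpt
  calc ENNReal.ofReal (c ^ n) * W C
      ≤ ENNReal.ofReal (c ^ n) * (ENNReal.ofReal |(c ^ n)⁻¹| * W (c • C)) := by
        exact mul_le_mul_right h2 _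
    _ = (ENNReal.ofReal (c ^ n) * ENNReal.ofReal |(c ^ n)⁻¹|) * W (c • C) := by rw [mul_assoc]
    _ = W (c • C) := by
        rw [← ENNReal.ofReal_mul (by positivity), abs_of_pos (by positivity),
          mul_inv_cancel₀ (by positivity), ENNReal.ofReal_one, one_mul]

lemma W_lt_top {C : Set (EuclideanSpace ℝ (Fin n))} (hC : IsCompact C)
    (hne : C.Nonempty) : W C < ⊤ := by
  obtain ⟨R, hR⟩ := hC.isBounded.subset_closedBall 0
  have hR0 : 0 ≤ R := by
    obtain ⟨y, hy⟩ := hne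
    have := hR hy
    simp only [mem_closedBall, dist_zero_right] at this
    exact le_trans (norm_nonneg y) this
  -- Gaussian domination
  have hint : Integrable (fun x : EuclideanSpace ℝ (Fin n) =>
      Real.exp (3 * π * R ^ 2) * Real.exp (-(π/4) * ‖x‖ ^ 2)) := by
    apply Integrable.const_mul
    have h := GaussianFourier.integrable_cexp_neg_mul_sq_norm_add
      (V := EuclideanSpace ℝ (Fin n)) (b := ((π/4 : ℝ) : ℂ))
      (by simpa using (by positivity : (0:ℝ) < π/4)) 0 0
    have h2 := h.norm
    apply h2.congr
    refine Filter.Eventually.of_forall fun x => ?_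
    simp only [Complex.norm_exp]
    congr 1
    have hre : ((‖x‖ : ℂ) ^ 2).re = ‖x‖ ^ 2 := by norm_cast
    have him : ((‖x‖ : ℂ) ^ 2).im = 0 := by norm_cast
    simp [Complex.add_re, Complex.mul_re, Complex.neg_re, Complex.neg_im, Complex.ofReal_re,
      Complex.ofReal_im, hre, him]
  have hpt : ∀ x, phi C x ≤ ENNReal.ofReal
      (Real.exp (3 * π * R ^ 2) * Real.exp (-(π/4) * ‖x‖ ^ 2)) := by
    intro x
    unfold phi
    apply ENNReal.ofReal_le_ofReal
    rw [← Real.exp_add]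
    apply Real.exp_le_exp.2
    have hd0 : 0 ≤ infDist x C := infDist_nonneg
    have hlow : ‖x‖ - R ≤ infDist x C := by
      obtain ⟨y, hy, hyd⟩ := hC.exists_infDist_eq_dist hne x
      have hyR : ‖y‖ ≤ R := by
        have := hR hy; simpa [mem_closedBall, dist_zero_right] using this
      rw [hyd, dist_eq_norm]
      have := norm_sub_norm_le x y
      linarith
    have hq : ‖x‖ ^ 2 / 4 ≤ infDist x C ^ 2 + 3 * R ^ 2 := by
      rcases le_or_gt ‖x‖ (3 * R) with h | h
      · nlinarith [norm_nonneg x]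
      · nlinarith [norm_nonneg x]
    nlinarith [Real.pi_pos]
  have hfin : (∫⁻ x, ENNReal.ofReal
      (Real.exp (3 * π * R ^ 2) * Real.exp (-(π/4) * ‖x‖ ^ 2))) < ⊤ :=
    hint.lintegral_lt_top
  exact lt_of_le_of_lt (lintegral_mono hpt) hfin

/-- The squared distance of `(u,v)` to the rotated product body. -/
noncomputable def Q (K L : Set (EuclideanSpace ℝ (Fin n))) (u v : EuclideanSpace ℝ (Fin n)) :
    ℝ :=
  ⨅ p : K × L, (‖u - (Real.sqrt 2)⁻¹ • ((p.1 : EuclideanSpace ℝ (Fin n))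
      + (p.2 : EuclideanSpace ℝ (Fin n)))‖ ^ 2
    + ‖v - ((p.1 : EuclideanSpace ℝ (Fin n)) - (p.2 : EuclideanSpace ℝ (Fin n)))‖ ^ 2)

noncomputable def Qexp (K L : Set (EuclideanSpace ℝ (Fin n)))
    (u v : EuclideanSpace ℝ (Fin n)) : ENNReal :=
  ENNReal.ofReal (Real.exp (-π * Q K L u v))

lemma Q_bddBelow (K L : Set (EuclideanSpace ℝ (Fin n))) (u v : EuclideanSpace ℝ (Fin n)) :
    BddBelow (Set.range fun p : K × L =>
      (‖u - (Real.sqrt 2)⁻¹ • ((p.1 : EuclideanSpace ℝ (Fin n))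
          + (p.2 : EuclideanSpace ℝ (Fin n)))‖ ^ 2
        + ‖v - ((p.1 : EuclideanSpace ℝ (Fin n)) - (p.2 : EuclideanSpace ℝ (Fin n)))‖ ^ 2)) := by
  refine ⟨0, ?_⟩
  rintro y ⟨pp, rfl⟩
  positivity

lemma Q_le {K L : Set (EuclideanSpace ℝ (Fin n))} {k lp : EuclideanSpace ℝ (Fin n)}
    (hk : k ∈ K) (hlp : lp ∈ L) (u v : EuclideanSpace ℝ (Fin n)) :
    Q K L u v ≤ ‖u - (Real.sqrt 2)⁻¹ • (k + lp)‖ ^ 2 + ‖v - (k - lp)‖ ^ 2 :=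
  ciInf_le (Q_bddBelow K L u v) (⟨⟨k, hk⟩, ⟨lp, hlp⟩⟩ : K × L)

lemma le_Q {K L : Set (EuclideanSpace ℝ (Fin n))} (hK : K.Nonempty) (hL : L.Nonempty)
    (x y : EuclideanSpace ℝ (Fin n)) :
    infDist x K ^ 2 + infDist y L ^ 2 ≤ Q K L ((Real.sqrt 2)⁻¹ • (x + y)) (x - y) := by
  haveI := hK.to_subtype
  haveI := hL.to_subtype
  refine le_ciInf fun p => ?_
  obtain ⟨⟨k, hk⟩, ⟨lp, hlp⟩⟩ := p
  simp only
  have h1 : infDist x K ^ 2 ≤ ‖x - k‖ ^ 2 := by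
    have := infDist_le_dist_of_mem hk (x := x)
    rw [dist_eq_norm] at this
    exact pow_le_pow_left₀ infDist_nonneg this 2
  have h2 : infDist y L ^ 2 ≤ ‖y - lp‖ ^ 2 := by
    have := infDist_le_dist_of_mem hlp (x := y)
    rw [dist_eq_norm] at this
    exact pow_le_pow_left₀ infDist_nonneg this 2
  have veq : (x + y) - (k + lp) = (x - k) + (y - lp) := by abel
  have hsmul : ‖(Real.sqrt 2)⁻¹ • (x + y) - (Real.sqrt 2)⁻¹ • (k + lp)‖ ^ 2
      = (1/2) * ‖(x - k) + (y - lp)‖ ^ 2 := by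
    rw [← smul_sub, veq, norm_smul, mul_pow, Real.norm_eq_abs,
      abs_of_pos (by positivity : (0:ℝ) < (Real.sqrt 2)⁻¹), inv_pow,
      Real.sq_sqrt (by norm_num : (0:ℝ) ≤ 2)]
    norm_num
  have hsub : (x - y) - (k - lp) = (x - k) - (y - lp) := by abel
  rw [hsmul, hsub]
  set a := x - k
  set b := y - lp
  have e1 : ‖a + b‖ ^ 2 = ‖a‖ ^ 2 + 2 * inner ℝ a b + ‖b‖ ^ 2 := norm_add_sq_real a b
  have e2 : ‖a - b‖ ^ 2 = ‖a‖ ^ 2 - 2 * inner ℝ a b + ‖b‖ ^ 2 := norm_sub_sq_real a b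
  have e3 : (0:ℝ) ≤ ‖a - b‖ ^ 2 := sq_nonneg _
  calc infDist x K ^ 2 + infDist y L ^ 2 ≤ ‖a‖ ^ 2 + ‖b‖ ^ 2 := add_le_add h1 h2
    _ ≤ (1/2) * ‖a + b‖ ^ 2 + ‖a - b‖ ^ 2 := by rw [e1]; rw [e2] at e3 ⊢; linarith

end WillsRS

open WillsRS

set_option maxHeartbeats 2000000 in
/-- For convex bodies `K, L ⊆ ℝⁿ` and `λ ∈ (0,1)` with
`(λK) ∩ ((1-λ)L) ≠ ∅`:
`W(((λK) ∩ ((1-λ)L))/√(λ(1-λ))) · W((1-λ)K - λL) ≤ (λ(1-λ))^{-n/2} W(K) W(L)`. -/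
theorem wills_rogers_shephard_two_bodies {n : ℕ} (K L : Set (EuclideanSpace ℝ (Fin n)))
    (hK₁ : IsCompact K) (hK₂ : Convex ℝ K) (hK₃ : K.Nonempty)
    (hL₁ : IsCompact L) (hL₂ : Convex ℝ L) (hL₃ : L.Nonempty)
    {l : ℝ} (hl : l ∈ Set.Ioo (0 : ℝ) 1)
    (hKL : ((l • K) ∩ ((1 - l) • L)).Nonempty) :
    wills ((Real.sqrt (l * (1 - l)))⁻¹ • ((l • K) ∩ ((1 - l) • L))) *
        wills ((1 - l) • K - l • L) ≤
      (l * (1 - l)) ^ (-(n : ℝ) / 2) * (wills K * wills L) := by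
  obtain ⟨hl0, hl1⟩ := hl
  have h1l : (0:ℝ) < 1 - l := by linarith
  set s : ℝ := Real.sqrt (l * (1 - l)) with hs_def
  have hll : (0:ℝ) < l * (1 - l) := by positivity
  have hs0 : 0 < s := Real.sqrt_pos.2 hll
  have hs_sq : s ^ 2 = l * (1 - l) := Real.sq_sqrt hll.le
  set A : Set (EuclideanSpace ℝ (Fin n)) := s⁻¹ • ((l • K) ∩ ((1 - l) • L)) with hA_def
  set B : Set (EuclideanSpace ℝ (Fin n)) := (1 - l) • K - l • L with hB_def
  -- basic compactness facts
  have hlK : IsCompact (l • K) := hK₁.smul l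
  have hlL : IsCompact ((1 - l) • L) := hL₁.smul (1 - l)
  have hAcpt : IsCompact A := (hlK.inter_right hlL.isClosed).smul s⁻¹
  have hAne : A.Nonempty := hKL.smul_set
  have hBcpt : IsCompact B := by
    have himg : B = (fun p : (EuclideanSpace ℝ (Fin n)) × (EuclideanSpace ℝ (Fin n)) =>
        p.1 - p.2) '' (((1 - l) • K) ×ˢ (l • L)) := by
      ext z
      constructor
      · rintro ⟨p, hp, q, hq, rfl⟩
        exact ⟨(p, q), ⟨hp, hq⟩, rfl⟩
      · rintro ⟨⟨p, q⟩, ⟨hp, hq⟩, rfl⟩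
        exact Set.sub_mem_sub hp hq
    rw [himg]
    exact ((hK₁.smul (1 - l)).prod (hL₁.smul l)).image (continuous_fst.sub continuous_snd)
  have hBne : B.Nonempty := by
    obtain ⟨k0, hk0⟩ := hK₃
    obtain ⟨l0, hl0'⟩ := hL₃
    exact ⟨(1 - l) • k0 - l • l0, Set.sub_mem_sub (Set.smul_mem_smul_set hk0)
      (Set.smul_mem_smul_set hl0')⟩
  -- the scaled copy of A
  have hsqrt2 : (0:ℝ) < Real.sqrt 2 := by positivity
  have h2s_pos : (0:ℝ) < Real.sqrt 2 * s := by positivity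
  have h2s_le : Real.sqrt 2 * s ≤ 1 := by
    have hsq : (Real.sqrt 2 * s) ^ 2 ≤ 1 := by
      rw [mul_pow, Real.sq_sqrt (by norm_num : (0:ℝ) ≤ 2), hs_sq]
      nlinarith
    nlinarith
  have hinv2 : (Real.sqrt 2)⁻¹ * 2 = Real.sqrt 2 := by
    rw [inv_mul_eq_div, div_eq_iff (ne_of_gt hsqrt2)]
    exact (Real.mul_self_sqrt (by norm_num : (0:ℝ) ≤ 2)).symm
  -- W of everything is finite
  have hWK := W_lt_top hK₁ hK₃
  have hWL := W_lt_top hL₁ hL₃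
  have hWA := W_lt_top hAcpt hAne
  have hWB := W_lt_top hBcpt hBne
  have hWsA := W_lt_top (hAcpt.smul (Real.sqrt 2 * s)) hAne.smul_set
  -- STEP 1 (inner bound): for every v,
  -- `phi B v * W ((√2 s) • A) ≤ ∫⁻ u, Qexp K L u v`.
  have inner_bound : ∀ v, phi B v * W ((Real.sqrt 2 * s) • A) ≤ ∫⁻ u, Qexp K L u v := by
    intro v
    obtain ⟨b, hbB, hbd⟩ := hBcpt.exists_infDist_eq_dist hBne v
    obtain ⟨p, hp, q, hq, hpq⟩ := Set.mem_sub.1 hbB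
    set T : Set (EuclideanSpace ℝ (Fin n)) :=
      ((Real.sqrt 2)⁻¹ • (p + q)) +ᵥ ((Real.sqrt 2 * s) • A) with hT_def
    have hTcpt : IsCompact T := ((hAcpt.smul (Real.sqrt 2 * s)).vadd _)
    have hTne : T.Nonempty := hAne.smul_set.vadd_set
    have hWT : W T = W ((Real.sqrt 2 * s) • A) := W_vadd _ _
    have hpoint : ∀ u, phi B v * phi T u ≤ Qexp K L u v := by
      intro u
      obtain ⟨t0, ht0T, ht0d⟩ := hTcpt.exists_infDist_eq_dist hTne u
      -- unpack t0
      obtain ⟨w, hw, hwt⟩ := Set.mem_vadd_set.1 ht0T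
      obtain ⟨a0, ha0, rfl⟩ := Set.mem_smul_set.1 hw
      obtain ⟨m, hm, rfl⟩ := Set.mem_smul_set.1 ha0
      obtain ⟨ka, hka, hkam⟩ := Set.mem_smul_set.1 hm.1
      obtain ⟨la, hla, hlam⟩ := Set.mem_smul_set.1 hm.2
      obtain ⟨kb, hkb, rfl⟩ := Set.mem_smul_set.1 hp
      obtain ⟨lb, hlb, rfl⟩ := Set.mem_smul_set.1 hq
      -- the convex combinations
      set k : EuclideanSpace ℝ (Fin n) := (1 - l) • kb + l • ka with hk_def
      set lp : EuclideanSpace ℝ (Fin n) := l • lb + (1 - l) • la with hlp_def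
      have hkK : k ∈ K := hK₂ hkb hka (by linarith) (by linarith) (by ring)
      have hlpL : lp ∈ L := hL₂ hlb hla (by linarith) (by linarith) (by ring)
      have hmsa : (Real.sqrt 2 * s) • s⁻¹ • m = Real.sqrt 2 • m := by
        rw [smul_smul, mul_assoc, mul_inv_cancel₀ (ne_of_gt hs0), mul_one]
      have hkm : k = (1 - l) • kb + m := by rw [hk_def, hkam]
      have hlpm : lp = l • lb + m := by rw [hlp_def, hlam]
      have halg1 : k - lp = b := by
        rw [hkm, hlpm, ← hpq]; abel
      have halg2 : (Real.sqrt 2)⁻¹ • (k + lp) = t0 := by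
        rw [← hwt, hmsa, hkm, hlpm]
        rw [show (1 - l) • kb + m + (l • lb + m) = ((1 - l) • kb + l • lb) + (m + m) by abel]
        rw [smul_add]
        congr 1
        rw [show m + m = (2:ℝ) • m by rw [two_smul], smul_smul, hinv2]
      have hQle : Q K L u v ≤ infDist u T ^ 2 + infDist v B ^ 2 := by
        have := Q_le hkK hlpL u v
        rw [halg1, halg2] at this
        rw [ht0d, hbd, dist_eq_norm, dist_eq_norm]
        exact this
      -- conclude
      simp only [phi, Qexp]
      rw [← ENNReal.ofReal_mul (by positivity), ← Real.exp_add]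
      apply ENNReal.ofReal_le_ofReal
      apply Real.exp_le_exp.2
      have hmul := mul_le_mul_of_nonneg_left hQle Real.pi_pos.le
      linarith
    have hcm : ∫⁻ u, phi B v * phi T u = phi B v * W T :=
      MeasureTheory.lintegral_const_mul' (phi B v) (phi T) (phi_ne_top B v)
    calc phi B v * W ((Real.sqrt 2 * s) • A) = phi B v * W T := by rw [hWT]
      _ = ∫⁻ u, phi B v * phi T u := hcm.symm
      _ ≤ ∫⁻ u, Qexp K L u v := lintegral_mono hpoint
  -- STEP 2 (substitution): for every v,
  -- `∫⁻ u, Qexp K L u v ≤ √2^n * ∫⁻ x, phi K x * phi L (x - v)`.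
  have step_subst : ∀ v, ∫⁻ u, Qexp K L u v
      ≤ ENNReal.ofReal (Real.sqrt 2 ^ n) * ∫⁻ x, phi K x * phi L (x - v) := by
    intro v
    have hsub := lintegral_comp_smul_add (G := fun u => Qexp K L u v)
      (c := Real.sqrt 2) (by positivity) (-((Real.sqrt 2)⁻¹ • v))
    have hinv : ENNReal.ofReal (Real.sqrt 2 ^ n) * ENNReal.ofReal |((Real.sqrt 2 ^ n)⁻¹)| = 1 := by
      rw [← ENNReal.ofReal_mul (by positivity), abs_of_pos (by positivity),
        mul_inv_cancel₀ (by positivity), ENNReal.ofReal_one]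
    have heq : ∫⁻ u, Qexp K L u v = ENNReal.ofReal (Real.sqrt 2 ^ n)
        * ∫⁻ x, Qexp K L (Real.sqrt 2 • x + -((Real.sqrt 2)⁻¹ • v)) v := by
      rw [hsub, ← mul_assoc, hinv, one_mul]
    rw [heq]
    apply mul_le_mul_right
    apply lintegral_mono
    intro x
    -- pointwise comparison via `le_Q` with `y = x - v`
    have harg : (Real.sqrt 2)⁻¹ • (x + (x - v)) = Real.sqrt 2 • x + -((Real.sqrt 2)⁻¹ • v) := by
      rw [show x + (x - v) = (2:ℝ) • x - v by rw [two_smul]; abel, smul_sub, smul_smul]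
      rw [hinv2, sub_eq_add_neg]
    have hxy : x - (x - v) = v := by abel
    have hQ := le_Q hK₃ hL₃ x (x - v)
    rw [harg, hxy] at hQ
    simp only [Qexp, phi]
    rw [← ENNReal.ofReal_mul (by positivity), ← Real.exp_add]
    apply ENNReal.ofReal_le_ofReal
    apply Real.exp_le_exp.2
    have hmul := mul_le_mul_of_nonneg_left hQ Real.pi_pos.le
    linarith
  -- STEP 3: the full chain in `ℝ≥0∞`.
  have hstep3 : W ((Real.sqrt 2 * s) • A) * W B
      ≤ ENNReal.ofReal (Real.sqrt 2 ^ n) * (W K * W L) := by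
    have e1 : ∫⁻ v, phi B v * W ((Real.sqrt 2 * s) • A) = W B * W ((Real.sqrt 2 * s) • A) :=
      MeasureTheory.lintegral_mul_const' (W ((Real.sqrt 2 * s) • A)) (phi B) hWsA.ne
    have e2 : ∫⁻ v, ∫⁻ u, Qexp K L u v
        ≤ ENNReal.ofReal (Real.sqrt 2 ^ n) * ∫⁻ v, ∫⁻ x, phi K x * phi L (x - v) := by
      calc ∫⁻ v, ∫⁻ u, Qexp K L u v
          ≤ ∫⁻ v, ENNReal.ofReal (Real.sqrt 2 ^ n) * ∫⁻ x, phi K x * phi L (x - v) :=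
            lintegral_mono step_subst
        _ = ENNReal.ofReal (Real.sqrt 2 ^ n) * ∫⁻ v, ∫⁻ x, phi K x * phi L (x - v) :=
            MeasureTheory.lintegral_const_mul' (ENNReal.ofReal (Real.sqrt 2 ^ n))
              (fun v => ∫⁻ x, phi K x * phi L (x - v)) ENNReal.ofReal_ne_top
    have e3 : ∫⁻ v, ∫⁻ x, phi K x * phi L (x - v)
        = ∫⁻ x, ∫⁻ v, phi K x * phi L (x - v) := by
      apply MeasureTheory.lintegral_lintegral_swap
      apply Measurable.aemeasurable
      exact ((measurable_phi K).comp measurable_snd).mul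
        ((measurable_phi L).comp (measurable_snd.sub measurable_fst))
    have e4 : ∫⁻ x, ∫⁻ v, phi K x * phi L (x - v) = W K * W L := by
      have e41 : ∀ x : EuclideanSpace ℝ (Fin n),
          ∫⁻ v, phi K x * phi L (x - v) = phi K x * W L := by
        intro x
        rw [MeasureTheory.lintegral_const_mul' (phi K x) (fun v => phi L (x - v))
          (phi_ne_top K x)]
        congr 1
        exact (Measure.measurePreserving_sub_left volume x).lintegral_comp (measurable_phi L)
      calc ∫⁻ x, ∫⁻ v, phi K x * phi L (x - v) = ∫⁻ x, phi K x * W L :=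
            lintegral_congr e41
        _ = W K * W L :=
            MeasureTheory.lintegral_mul_const' (W L) (phi K) hWL.ne
    calc W ((Real.sqrt 2 * s) • A) * W B = W B * W ((Real.sqrt 2 * s) • A) := mul_comm _ _
      _ = ∫⁻ v, phi B v * W ((Real.sqrt 2 * s) • A) := e1.symm
      _ ≤ ∫⁻ v, ∫⁻ u, Qexp K L u v := lintegral_mono inner_bound
      _ ≤ ENNReal.ofReal (Real.sqrt 2 ^ n) * ∫⁻ v, ∫⁻ x, phi K x * phi L (x - v) := e2
      _ = ENNReal.ofReal (Real.sqrt 2 ^ n) * (W K * W L) := by rw [e3, e4]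
  have hmain : ENNReal.ofReal ((Real.sqrt 2 * s) ^ n) * (W A * W B)
      ≤ ENNReal.ofReal (Real.sqrt 2 ^ n) * (W K * W L) := by
    calc ENNReal.ofReal ((Real.sqrt 2 * s) ^ n) * (W A * W B)
        = (ENNReal.ofReal ((Real.sqrt 2 * s) ^ n) * W A) * W B := (mul_assoc _ _ _).symm
      _ ≤ W ((Real.sqrt 2 * s) • A) * W B :=
          mul_le_mul_left (W_smul_ge h2s_pos h2s_le A) (W B)
      _ ≤ ENNReal.ofReal (Real.sqrt 2 ^ n) * (W K * W L) := hstep3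
  -- STEP 4: convert to real numbers.
  have hRHSne : ENNReal.ofReal (Real.sqrt 2 ^ n) * (W K * W L) ≠ ⊤ :=
    ENNReal.mul_ne_top ENNReal.ofReal_ne_top (ENNReal.mul_ne_top hWK.ne hWL.ne)
  have hreal := ENNReal.toReal_mono hRHSne hmain
  rw [ENNReal.toReal_mul, ENNReal.toReal_mul, ENNReal.toReal_mul, ENNReal.toReal_mul,
    ENNReal.toReal_ofReal (by positivity), ENNReal.toReal_ofReal (by positivity)] at hreal
  rw [wills_eq_toReal, wills_eq_toReal, wills_eq_toReal, wills_eq_toReal]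
  set wA := (W A).toReal
  set wB := (W B).toReal
  set wK := (W K).toReal
  set wL := (W L).toReal
  have hwA : 0 ≤ wA := ENNReal.toReal_nonneg
  have hwB : 0 ≤ wB := ENNReal.toReal_nonneg
  have hwK : 0 ≤ wK := ENNReal.toReal_nonneg
  have hwL : 0 ≤ wL := ENNReal.toReal_nonneg
  -- from `(√2 s)^n (wA wB) ≤ √2^n (wK wL)` deduce the claim
  have hsn : (0:ℝ) < s ^ n := by positivity
  have h2n : (0:ℝ) < Real.sqrt 2 ^ n := by positivity
  have hkey : s ^ n * (wA * wB) ≤ wK * wL := by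
    rw [mul_pow] at hreal
    nlinarith
  have hconst : (l * (1 - l)) ^ (-(n : ℝ) / 2) = (s ^ n)⁻¹ := by
    rw [show (-(n : ℝ) / 2) = (1/2) * (-(n:ℝ)) by ring]
    rw [Real.rpow_mul hll.le]
    rw [show ((l * (1 - l)) ^ ((1:ℝ)/2)) = s by
      rw [hs_def, Real.sqrt_eq_rpow]]
    rw [Real.rpow_neg hs0.le, Real.rpow_natCast]
  rw [hconst]
  rw [le_inv_mul_iff₀ hsn]
  exact hkey
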